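/- The map (ρ₁, ρ₂) ↦ √(1 − G(ρ₁,ρ₂)), where G is the super-fidelity G(ρ₁,ρ₂) = tr(ρ₁ρ₂) + √((1-tr ρ₁²)(1-tr ρ₂²)), satisfies the triangle inequality on density matrices: √(1−G(ρ₁,ρ₃)) ≤ √(1−G(ρ₁,ρ₂)) + √(1−G(ρ₂,ρ₃)). -/

import Mathlib

open Matrix ComplexOrder

/-- Super-fidelity `G(X,Y) = tr(XY) + √((1-tr X²)(1-tr Y²))`. -/
noncomputable def supFid {n : Type*} [Fintype n] (X Y : Matrix n n ℂ) : ℝ :=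
  ((X * Y).trace).re +
    Real.sqrt ((1 - ((X * X).trace).re) * (1 - ((Y * Y).trace).re))

lemma trace_sq_re_eq {N : ℕ} (H : Matrix (Fin N) (Fin N) ℂ) (hH : H.IsHermitian) :
    ((H * H).trace).re = ∑ i, ∑ j, Complex.normSq (H i j) := by
  have h1 : (H * H).trace = ∑ i, ∑ j, H i j * H j i := by
    simp [Matrix.trace, Matrix.mul_apply, Matrix.diag]
  have h2 : ∀ i j : Fin N, H i j * H j i = (Complex.normSq (H i j) : ℂ) := by
    intro i j
    rw [← hH.apply j i]
    exact Complex.mul_conj (H i j)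
  rw [h1]
  simp only [h2]
  simp [Complex.re_sum]

lemma trace_sq_le_one {N : ℕ} {ρ : Matrix (Fin N) (Fin N) ℂ} (h : ρ.PosSemidef)
    (t : ρ.trace = 1) : ((ρ * ρ).trace).re ≤ 1 := by
  have hH := h.1
  have hsp := hH.spectral_theorem
  rw [Unitary.conjStarAlgAut_apply] at hsp
  have hU : star (hH.eigenvectorUnitary : Matrix (Fin N) (Fin N) ℂ) *
      (hH.eigenvectorUnitary : Matrix (Fin N) (Fin N) ℂ) = 1 :=
    Matrix.mem_unitaryGroup_iff'.mp (hH.eigenvectorUnitary).2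
  set U : Matrix (Fin N) (Fin N) ℂ := (hH.eigenvectorUnitary : Matrix (Fin N) (Fin N) ℂ)
  set D : Matrix (Fin N) (Fin N) ℂ := Matrix.diagonal (RCLike.ofReal ∘ hH.eigenvalues)
  have htrρ : ρ.trace = D.trace := by
    rw [hsp, Matrix.trace_mul_cycle, hU, Matrix.one_mul]
  have htrρ2 : (ρ * ρ).trace = (D * D).trace := by
    conv_lhs => rw [hsp]
    simp only [← Matrix.mul_assoc]
    rw [Matrix.mul_assoc (U * D) (star U) U, hU, Matrix.mul_one,
      Matrix.mul_assoc U D D, Matrix.trace_mul_cycle, hU, Matrix.one_mul]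
  have hD : D.trace = ((∑ i, hH.eigenvalues i : ℝ) : ℂ) := by
    simp [D, Matrix.trace_diagonal]
  have hD2 : (D * D).trace = ((∑ i, (hH.eigenvalues i)^2 : ℝ) : ℂ) := by
    simp [D, Matrix.diagonal_mul_diagonal, Matrix.trace_diagonal, sq]
  have hsum1 : ∑ i, hH.eigenvalues i = 1 := by
    have := t
    rw [htrρ, hD] at this
    exact_mod_cast this
  have : ((ρ * ρ).trace).re = ∑ i, (hH.eigenvalues i)^2 := by
    rw [htrρ2, hD2, Complex.ofReal_re]
  rw [this]
  calc ∑ i, (hH.eigenvalues i)^2 ≤ (∑ i, hH.eigenvalues i)^2 :=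
        Finset.sum_sq_le_sq_sum_of_nonneg (fun i _ => h.eigenvalues_nonneg i)
    _ = 1 := by rw [hsum1]; norm_num

/-- Embedding of a matrix into a real Euclidean space recording real parts, imaginary
parts and the extra coordinate `√(1 - tr ρ²)`. -/
noncomputable def emb {N : ℕ} (ρ : Matrix (Fin N) (Fin N) ℂ) :
    EuclideanSpace ℝ ((Fin N × Fin N) ⊕ ((Fin N × Fin N) ⊕ Unit)) :=
  WithLp.toLp 2 fun (x : (Fin N × Fin N) ⊕ ((Fin N × Fin N) ⊕ Unit)) => match x with
  | Sum.inl p => (ρ p.1 p.2).re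
  | Sum.inr (Sum.inl p) => (ρ p.1 p.2).im
  | Sum.inr (Sum.inr _) => Real.sqrt (1 - ((ρ * ρ).trace).re)

lemma emb_dist {N : ℕ} (ρ σ : Matrix (Fin N) (Fin N) ℂ)
    (hρ : ρ.PosSemidef) (hσ : σ.PosSemidef) (tρ : ρ.trace = 1) (tσ : σ.trace = 1) :
    dist (emb ρ) (emb σ) = Real.sqrt 2 * Real.sqrt (1 - supFid ρ σ) := by
  have hx : 0 ≤ 1 - ((ρ * ρ).trace).re := by linarith [trace_sq_le_one hρ tρ]
  have hy : 0 ≤ 1 - ((σ * σ).trace).re := by linarith [trace_sq_le_one hσ tσ]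
  rw [EuclideanSpace.dist_eq]
  have hsum : (∑ i, dist (emb ρ i) (emb σ i) ^ 2) = 2 * (1 - supFid ρ σ) := by
    rw [Fintype.sum_sum_type, Fintype.sum_sum_type]
    have e1 : ∀ p : Fin N × Fin N,
        dist (emb ρ (Sum.inl p)) (emb σ (Sum.inl p)) ^ 2
          = ((ρ p.1 p.2).re - (σ p.1 p.2).re) ^ 2 := fun p => by
      simp [emb, Real.dist_eq, sq_abs]
    have e2 : ∀ p : Fin N × Fin N,
        dist (emb ρ (Sum.inr (Sum.inl p))) (emb σ (Sum.inr (Sum.inl p))) ^ 2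
          = ((ρ p.1 p.2).im - (σ p.1 p.2).im) ^ 2 := fun p => by
      simp [emb, Real.dist_eq, sq_abs]
    have e3 : ∀ u : Unit,
        dist (emb ρ (Sum.inr (Sum.inr u))) (emb σ (Sum.inr (Sum.inr u))) ^ 2
          = (Real.sqrt (1 - ((ρ * ρ).trace).re) - Real.sqrt (1 - ((σ * σ).trace).re)) ^ 2 :=
      fun u => by simp [emb, Real.dist_eq, sq_abs]
    simp only [e1, e2, e3]
    have hS : ∑ p : Fin N × Fin N, ((ρ p.1 p.2).re - (σ p.1 p.2).re) ^ 2
        + ∑ p : Fin N × Fin N, ((ρ p.1 p.2).im - (σ p.1 p.2).im) ^ 2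
        = ((ρ * ρ).trace).re + ((σ * σ).trace).re - 2 * ((ρ * σ).trace).re := by
      have hherm : (ρ - σ).IsHermitian := hρ.1.sub hσ.1
      have hfrob := trace_sq_re_eq (ρ - σ) hherm
      have hexp : (ρ - σ) * (ρ - σ) = ρ * ρ - ρ * σ - σ * ρ + σ * σ := by noncomm_ring
      rw [hexp] at hfrob
      have hcomm : (σ * ρ).trace = (ρ * σ).trace := Matrix.trace_mul_comm σ ρ
      simp only [Matrix.trace_add, Matrix.trace_sub, hcomm, Complex.add_re,
        Complex.sub_re] at hfrob
      have hsplit : ∑ i, ∑ j, Complex.normSq ((ρ - σ) i j)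
          = ∑ p : Fin N × Fin N, ((ρ p.1 p.2).re - (σ p.1 p.2).re) ^ 2
            + ∑ p : Fin N × Fin N, ((ρ p.1 p.2).im - (σ p.1 p.2).im) ^ 2 := by
        rw [← Finset.sum_add_distrib, Fintype.sum_prod_type]
        apply Finset.sum_congr rfl
        intro i _
        apply Finset.sum_congr rfl
        intro j _
        simp [Complex.normSq_apply, Matrix.sub_apply, sq]
      rw [hsplit] at hfrob
      linarith
    have hlast : (Real.sqrt (1 - ((ρ * ρ).trace).re) - Real.sqrt (1 - ((σ * σ).trace).re)) ^ 2
        = (1 - ((ρ * ρ).trace).re) + (1 - ((σ * σ).trace).re)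
          - 2 * Real.sqrt ((1 - ((ρ * ρ).trace).re) * (1 - ((σ * σ).trace).re)) := by
      rw [sub_sq, Real.sq_sqrt hx, Real.sq_sqrt hy, Real.sqrt_mul hx]
      ring
    simp only [Finset.univ_unique, Finset.sum_singleton] at *
    rw [hlast, supFid]
    linarith
  rw [hsum, Real.sqrt_mul (by norm_num : (0:ℝ) ≤ 2)]

theorem rootInfidelity_triangle {N : ℕ} (ρ₁ ρ₂ ρ₃ : Matrix (Fin N) (Fin N) ℂ)
    (h1 : ρ₁.PosSemidef) (h2 : ρ₂.PosSemidef) (h3 : ρ₃.PosSemidef)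
    (t1 : ρ₁.trace = 1) (t2 : ρ₂.trace = 1) (t3 : ρ₃.trace = 1) :
    Real.sqrt (1 - supFid ρ₁ ρ₃) ≤
      Real.sqrt (1 - supFid ρ₁ ρ₂) + Real.sqrt (1 - supFid ρ₂ ρ₃) := by
  have h2pos : (0:ℝ) < Real.sqrt 2 := Real.sqrt_pos.mpr (by norm_num)
  rw [← mul_le_mul_iff_right₀ h2pos, mul_add,
    ← emb_dist ρ₁ ρ₃ h1 h3 t1 t3, ← emb_dist ρ₁ ρ₂ h1 h2 t1 t2, ← emb_dist ρ₂ ρ₃ h2 h3 t2 t3]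
  exact dist_triangle (emb ρ₁) (emb ρ₂) (emb ρ₃)
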